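/- Let f be an (ℓ,k,t)-dominating function of G, and define f' : V → ℕ by f'(v) = f(v) if v ∈ 𝓕 and f'(v) = 0 otherwise. Then f' is an (ℓ,k₀,t₀)-dominating function of G, and f'(V) = f(V) − ∑_{v ∈ V \ 𝓕} t(v). -/
import Mathlib


open Classical Finset

/-- The closed neighborhood `N[v]` of `v` in `G`, as a finset. -/
noncomputable def closedNbhd {V : Type*} [Fintype V] (G : SimpleGraph V) (v : V) : Finset V :=
  Finset.univ.filter (fun w => G.Adj v w ∨ w = v)

/-- `f` is an `(ℓ,k,t)`-dominating function of `G`: `f ≤ ℓ` everywhere,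
`f(N[v]) ≥ k(v)` for all `v`, and `f(v) = t(v)` at every non-free vertex
(`t v = none` means the vertex `v` is free). -/
def IsLDomFn {V : Type*} [Fintype V] (G : SimpleGraph V) (ℓ : ℕ) (k : V → ℕ)
    (t : V → Option ℕ) (f : V → ℕ) : Prop :=
  (∀ v, f v ≤ ℓ) ∧ (∀ v, k v ≤ ∑ w ∈ closedNbhd G v, f w) ∧
    (∀ v a, t v = some a → f v = a)

/-- `γ_{ℓ,k,t}(G)`: minimum weight of an `(ℓ,k,t)`-dominating function. -/
noncomputable def gammaL {V : Type*} [Fintype V] (G : SimpleGraph V) (ℓ : ℕ) (k : V → ℕ)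
    (t : V → Option ℕ) : ℕ :=
  sInf {s | ∃ f, IsLDomFn G ℓ k t f ∧ s = ∑ v, f v}

/-- `k₀(v) = k(v) ∸ ∑_{w ∈ N[v] \ 𝓕} t(w)`. -/
noncomputable def kZero {V : Type*} [Fintype V] (G : SimpleGraph V) (k : V → ℕ)
    (t : V → Option ℕ) : V → ℕ :=
  fun v => k v - ∑ w ∈ (closedNbhd G v).filter (fun w => (t w).isSome), (t w).getD 0

/-- `t₀(v) = 0` if `t(v) ≠ F`, and `t₀(v) = F` otherwise. -/
def tZero {V : Type*} (t : V → Option ℕ) : V → Option ℕ :=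
  fun v => (t v).map (fun _ => 0)

lemma split_sum {V : Type*} (t : V → Option ℕ) (f : V → ℕ)
    (hf : ∀ v a, t v = some a → f v = a) (s : Finset V) :
    ∑ w ∈ s, f w = (∑ w ∈ s, if t w = none then f w else 0)
      + ∑ w ∈ s.filter (fun w => (t w).isSome), (t w).getD 0 := by
  rw [← Finset.sum_filter_add_sum_filter_not s (fun w => (t w).isSome)]
  have h1 : ∑ w ∈ s.filter (fun w => (t w).isSome), f w
      = ∑ w ∈ s.filter (fun w => (t w).isSome), (t w).getD 0 := by
    apply Finset.sum_congr rfl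
    intro w hw
    obtain ⟨a, ha⟩ := Option.isSome_iff_exists.mp (Finset.mem_filter.mp hw).2
    rw [hf w a ha, ha]; rfl
  have h2 : (∑ w ∈ s, if t w = none then f w else 0)
      = ∑ w ∈ s.filter (fun w => ¬ (t w).isSome), f w := by
    rw [Finset.sum_filter]
    apply Finset.sum_congr rfl
    intro w _
    by_cases h : t w = none <;> simp [h]
  omega

/-- if `f` is an `(ℓ,k,t)`-dominating function, then `f'`, equal to `f`
on the free vertices and `0` elsewhere, is an `(ℓ,k₀,t₀)`-dominating function with
`f'(V) = f(V) - ∑_{v ∉ 𝓕} t(v)`. -/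
theorem stmt_15 {V : Type*} [Fintype V] (G : SimpleGraph V) (ℓ : ℕ) (k : V → ℕ)
    (t : V → Option ℕ) (ht : ∀ v a, t v = some a → a ≤ ℓ)
    (f : V → ℕ) (hf : IsLDomFn G ℓ k t f) :
    IsLDomFn G ℓ (kZero G k t) (tZero t) (fun v => if t v = none then f v else 0) ∧
      (∑ v, if t v = none then f v else 0) =
        (∑ v, f v) - ∑ v ∈ Finset.univ.filter (fun v => (t v).isSome), (t v).getD 0 := by
  obtain ⟨h1, h2, h3⟩ := hf
  constructor
  · refine ⟨?_, ?_, ?_⟩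
    · intro v; by_cases h : t v = none <;> simp [h, h1 v]
    · intro v
      have := h2 v
      have hs := split_sum t f h3 (closedNbhd G v)
      unfold kZero
      have hd : ∑ w ∈ closedNbhd G v, (fun v => if t v = none then f v else 0) w
          = ∑ w ∈ closedNbhd G v, if t w = none then f w else 0 := rfl
      omega
    · intro v a hv
      unfold tZero at hv
      simp only [Option.map_eq_some_iff] at hv
      obtain ⟨b, hb, rfl⟩ := hv
      simp [hb]
  · have := split_sum t f h3 Finset.univ
    omega
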